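/- Let ℓ be an odd prime. The set of indices [N_ns(ℓ) : G] over subgroups G of N_ns(ℓ) that belong to the split Cartan C_s(ℓ) equals the set of positive integers divisible by ℓ+1 and dividing ℓ²−1. -/

import Mathlib

open Matrix

abbrev GL2 (ℓ : ℕ) : Type := GL (Fin 2) (ZMod ℓ)

namespace Paper

/-- The underlying matrix of an element of `GL₂(ℤ/ℓℤ)`. -/
def mat {ℓ : ℕ} (g : GL2 ℓ) : Matrix (Fin 2) (Fin 2) (ZMod ℓ) := ↑g

/-- The set of scalar matrices `Z(ℓ)`. -/
def ZSet (ℓ : ℕ) : Set (GL2 ℓ) :=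
  { g | ∃ x : ZMod ℓ, mat g = x • (1 : Matrix (Fin 2) (Fin 2) (ZMod ℓ)) }

/-- The split Cartan `C_s(ℓ)`: invertible diagonal matrices. -/
def CsSet (ℓ : ℕ) : Set (GL2 ℓ) := { g | mat g 0 1 = 0 ∧ mat g 1 0 = 0 }

/-- The normalizer `N_s(ℓ)` of the split Cartan: diagonal and antidiagonal matrices. -/
def NsSet (ℓ : ℕ) : Set (GL2 ℓ) :=
  CsSet ℓ ∪ { g | mat g 0 0 = 0 ∧ mat g 1 1 = 0 }

/-- The nonsplit Cartan `C_ns(ℓ)` relative to the nonsquare `ε`. -/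
def CnsSet (ℓ : ℕ) (ε : ZMod ℓ) : Set (GL2 ℓ) :=
  { g | ∃ x y : ZMod ℓ, mat g = !![x, ε * y; y, x] }

/-- The normalizer `N_ns(ℓ)` of the nonsplit Cartan. -/
def NnsSet (ℓ : ℕ) (ε : ZMod ℓ) : Set (GL2 ℓ) :=
  CnsSet ℓ ε ∪ { g | ∃ x y : ZMod ℓ, mat g = !![x, -(ε * y); y, -x] }

/-- The ramified Cartan `C_r(ℓ)`. -/
def CrSet (ℓ : ℕ) : Set (GL2 ℓ) :=
  { g | mat g 1 0 = 0 ∧ mat g 0 0 = mat g 1 1 }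

/-- The Borel subgroup `B(ℓ)`: upper triangular matrices. -/
def BorelSet (ℓ : ℕ) : Set (GL2 ℓ) := { g | mat g 1 0 = 0 }

/-- `G` is conjugate in `GL₂(ℤ/ℓℤ)` to a subgroup of the set `M`. -/
def ConjSub {ℓ : ℕ} (G : Subgroup (GL2 ℓ)) (M : Set (GL2 ℓ)) : Prop :=
  ∃ a : GL2 ℓ, ∀ g ∈ G, a * g * a⁻¹ ∈ M

/-- `G` belongs to `Z(ℓ)`. -/
def BelongsZ {ℓ : ℕ} (G : Subgroup (GL2 ℓ)) : Prop := ConjSub G (ZSet ℓ)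

/-- `G` belongs to `C_s(ℓ)`. -/
def BelongsCs {ℓ : ℕ} (G : Subgroup (GL2 ℓ)) : Prop :=
  ConjSub G (CsSet ℓ) ∧ ¬ ConjSub G (ZSet ℓ)

/-- `G` belongs to `C_ns(ℓ)`. -/
def BelongsCns {ℓ : ℕ} (ε : ZMod ℓ) (G : Subgroup (GL2 ℓ)) : Prop :=
  ConjSub G (CnsSet ℓ ε) ∧ ¬ ConjSub G (ZSet ℓ)

/-- `G` belongs to `N_s(ℓ)`. -/
def BelongsNs {ℓ : ℕ} (G : Subgroup (GL2 ℓ)) : Prop :=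
  ConjSub G (NsSet ℓ) ∧ ¬ ConjSub G (CsSet ℓ)

/-- `G` belongs to `N_ns(ℓ)`. -/
def BelongsNns {ℓ : ℕ} (ε : ZMod ℓ) (G : Subgroup (GL2 ℓ)) : Prop :=
  ConjSub G (NnsSet ℓ ε) ∧ ¬ ConjSub G (CnsSet ℓ ε)

/-- `G` belongs to the ramified Cartan `C_r(ℓ)`. -/
def BelongsCr {ℓ : ℕ} (G : Subgroup (GL2 ℓ)) : Prop :=
  ConjSub G (CrSet ℓ) ∧ ¬ ConjSub G (ZSet ℓ)

/-- `H` is a twist of `G`: either `H = ⟨G, -I⟩`, or `H` is an index-2 subgroup of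
`⟨G, -I⟩` not containing `-I`. -/
def TwistOf {ℓ : ℕ} (G H : Subgroup (GL2 ℓ)) : Prop :=
  H = G ⊔ Subgroup.closure {(-1 : GL2 ℓ)} ∨
    (H ≤ G ⊔ Subgroup.closure {(-1 : GL2 ℓ)} ∧
      H.relIndex (G ⊔ Subgroup.closure {(-1 : GL2 ℓ)}) = 2 ∧
      (-1 : GL2 ℓ) ∉ H)

/-- `H` fixes a nonzero vector of `(ℤ/ℓℤ)²`. -/
def FixesVec {ℓ : ℕ} (H : Subgroup (GL2 ℓ)) : Prop :=
  ∃ v : Fin 2 → ZMod ℓ, v ≠ 0 ∧ ∀ h ∈ H, Matrix.mulVec (mat h) v = v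


section Aux
set_option linter.unusedSectionVars false
variable {ℓ : ℕ}

lemma mat_mul (g h : GL2 ℓ) : mat (g * h) = mat g * mat h := rfl
lemma mat_one : mat (1 : GL2 ℓ) = 1 := rfl
lemma mat_injective : Function.Injective (mat (ℓ := ℓ)) := fun _ _ h => Units.ext h
lemma mat_mul_inv (g : GL2 ℓ) : mat g * mat g⁻¹ = 1 := by
  rw [← mat_mul, mul_inv_cancel, mat_one]

def OutSet (ℓ : ℕ) (ε : ZMod ℓ) : Set (GL2 ℓ) :=
  { g : GL2 ℓ | ∃ x y : ZMod ℓ, mat g = !![x, -(ε * y); y, -x] }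

lemma mem_cns_iff {ε : ZMod ℓ} {g : GL2 ℓ} :
    g ∈ CnsSet ℓ ε ↔ mat g 0 1 = ε * mat g 1 0 ∧ mat g 1 1 = mat g 0 0 := by
  constructor
  · rintro ⟨x, y, h⟩; rw [h]; simp
  · rintro ⟨h1, h2⟩
    refine ⟨mat g 0 0, mat g 1 0, ?_⟩
    ext i j; fin_cases i <;> fin_cases j <;> simp [h1, h2]

lemma mem_out_iff {ε : ZMod ℓ} {g : GL2 ℓ} :
    g ∈ OutSet ℓ ε ↔ mat g 0 1 = -(ε * mat g 1 0) ∧ mat g 1 1 = -(mat g 0 0) := by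
  constructor
  · rintro ⟨x, y, h⟩; rw [h]; simp
  · rintro ⟨h1, h2⟩
    refine ⟨mat g 0 0, mat g 1 0, ?_⟩
    ext i j; fin_cases i <;> fin_cases j <;> simp [h1, h2]

variable [Fact (Nat.Prime ℓ)]

instance : NeZero ℓ := ⟨(Fact.out : Nat.Prime ℓ).pos.ne'⟩

lemma mat_ne_zero (g : GL2 ℓ) : mat g ≠ 0 := by
  intro h
  have := mat_mul_inv g
  rw [h, zero_mul] at this
  exact one_ne_zero this.symm

lemma mul_entry (g h : GL2 ℓ) (i j : Fin 2) :
    mat (g * h) i j = mat g i 0 * mat h 0 j + mat g i 1 * mat h 1 j := by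
  rw [mat_mul, Matrix.mul_apply, Fin.sum_univ_two]

lemma entries_ne_zero {ε : ZMod ℓ} {g : GL2 ℓ}
    (h : g ∈ CnsSet ℓ ε ∨ g ∈ OutSet ℓ ε) : ¬(mat g 0 0 = 0 ∧ mat g 1 0 = 0) := by
  rintro ⟨h1, h2⟩
  apply mat_ne_zero g
  ext i j
  rcases h with h | h
  · obtain ⟨ha, hb⟩ := mem_cns_iff.mp h
    fin_cases i <;> fin_cases j <;> simp [h1, h2, ha, hb]
  · obtain ⟨ha, hb⟩ := mem_out_iff.mp h
    fin_cases i <;> fin_cases j <;> simp [h1, h2, ha, hb]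

lemma norm_ne_zero {ε : ZMod ℓ} (hε : ∀ t : ZMod ℓ, t ^ 2 ≠ ε) {x y : ZMod ℓ}
    (h : ¬(x = 0 ∧ y = 0)) : x ^ 2 - ε * y ^ 2 ≠ 0 := by
  intro h0
  by_cases hy : y = 0
  · subst hy
    have hx : x = 0 := by
      have : x ^ 2 = 0 := by linear_combination h0
      exact pow_eq_zero_iff (n := 2) (by norm_num) |>.mp this
    exact h ⟨hx, rfl⟩
  · apply hε (x * y⁻¹)
    field_simp
    linear_combination h0

noncomputable def cnsElt (ε : ZMod ℓ) (hε : ∀ t : ZMod ℓ, t ^ 2 ≠ ε) (x y : ZMod ℓ)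
    (h : ¬(x = 0 ∧ y = 0)) : GL2 ℓ :=
  Matrix.GeneralLinearGroup.mkOfDetNeZero !![x, ε * y; y, x] (by
    rw [Matrix.det_fin_two_of]
    intro h0
    exact norm_ne_zero hε h (by linear_combination h0))

lemma mat_cnsElt (ε : ZMod ℓ) (hε : ∀ t : ZMod ℓ, t ^ 2 ≠ ε) (x y : ZMod ℓ)
    (h : ¬(x = 0 ∧ y = 0)) : mat (cnsElt ε hε x y h) = !![x, ε * y; y, x] := rfl

lemma card_cns {ε : ZMod ℓ} (hε : ∀ t : ZMod ℓ, t ^ 2 ≠ ε) :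
    Nat.card (CnsSet ℓ ε) = ℓ ^ 2 - 1 := by
  have hf : Function.Bijective (fun p : {p : ZMod ℓ × ZMod ℓ // ¬(p.1 = 0 ∧ p.2 = 0)} =>
      (⟨cnsElt ε hε p.1.1 p.1.2 p.2, ⟨p.1.1, p.1.2, rfl⟩⟩ : CnsSet ℓ ε)) := by
    constructor
    · rintro ⟨⟨x, y⟩, hp⟩ ⟨⟨x', y'⟩, hp'⟩ h
      have := congrArg (fun z => mat z.1) h
      simp only [mat_cnsElt] at this
      have hx := congrFun (congrFun this 0) 0
      have hy := congrFun (congrFun this 1) 0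
      simp at hx hy
      exact Subtype.ext (Prod.ext hx hy)
    · rintro ⟨g, hg⟩
      have hne := entries_ne_zero (ε := ε) (Or.inl hg)
      refine ⟨⟨(mat g 0 0, mat g 1 0), hne⟩, ?_⟩
      apply Subtype.ext
      apply mat_injective
      rw [mat_cnsElt]
      obtain ⟨h1, h2⟩ := mem_cns_iff.mp hg
      ext i j; fin_cases i <;> fin_cases j <;> simp [h1, h2]
  rw [← Nat.card_eq_of_bijective _ hf, Nat.card_eq_fintype_card]
  have : Fintype.card {p : ZMod ℓ × ZMod ℓ // ¬(p.1 = 0 ∧ p.2 = 0)}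
      = Fintype.card (ZMod ℓ × ZMod ℓ) - 1 := by
    rw [Fintype.card_subtype_compl (p := fun p : ZMod ℓ × ZMod ℓ => p.1 = 0 ∧ p.2 = 0)]
    congr 1
    rw [Fintype.card_eq_one_iff]
    refine ⟨⟨(0,0), rfl, rfl⟩, ?_⟩
    rintro ⟨⟨a,b⟩, h1, h2⟩
    simp only at h1 h2
    subst h1; subst h2; rfl
  rw [this, Fintype.card_prod, ZMod.card, sq]


noncomputable def wU (ℓ : ℕ) [Fact (Nat.Prime ℓ)] : GL2 ℓ :=
  Matrix.GeneralLinearGroup.mkOfDetNeZero !![1, 0; 0, -1] (by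
    rw [Matrix.det_fin_two_of]
    simp)

lemma mat_wU : mat (wU ℓ) = !![1, 0; 0, -1] := rfl

lemma wU_entry_00 : mat (wU ℓ) 0 0 = 1 := rfl
lemma wU_entries : mat (wU ℓ) 0 0 = 1 ∧ mat (wU ℓ) 0 1 = 0 ∧ mat (wU ℓ) 1 0 = 0
    ∧ mat (wU ℓ) 1 1 = -1 := by
  rw [mat_wU]; norm_num

lemma wU_mul_entry (g : GL2 ℓ) (j : Fin 2) :
    mat (wU ℓ * g) 0 j = mat g 0 j ∧ mat (wU ℓ * g) 1 j = -(mat g 1 j) := by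
  obtain ⟨e1, e2, e3, e4⟩ := wU_entries (ℓ := ℓ)
  rw [mul_entry, mul_entry, e1, e2, e3, e4]
  ring_nf
  exact ⟨trivial, trivial⟩

lemma wU_sq : wU ℓ * wU ℓ = 1 := by
  apply mat_injective
  rw [mat_one]
  ext i j
  obtain ⟨h1, h2⟩ := wU_mul_entry (wU ℓ) j
  obtain ⟨e1, e2, e3, e4⟩ := wU_entries (ℓ := ℓ)
  fin_cases i <;> fin_cases j <;>
    simp_all [Matrix.one_apply]

lemma wU_mul_cns {ε : ZMod ℓ} {g : GL2 ℓ} (hg : g ∈ CnsSet ℓ ε) : wU ℓ * g ∈ OutSet ℓ ε := by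
  obtain ⟨h1, h2⟩ := mem_cns_iff.mp hg
  rw [mem_out_iff]
  obtain ⟨a1, b1⟩ := wU_mul_entry (ℓ := ℓ) g 1
  obtain ⟨a0, b0⟩ := wU_mul_entry (ℓ := ℓ) g 0
  rw [a1, b1, b0, a0, h1, h2]
  ring_nf
  exact ⟨trivial, trivial⟩

lemma wU_mul_out {ε : ZMod ℓ} {g : GL2 ℓ} (hg : g ∈ OutSet ℓ ε) : wU ℓ * g ∈ CnsSet ℓ ε := by
  obtain ⟨h1, h2⟩ := mem_out_iff.mp hg
  rw [mem_cns_iff]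
  obtain ⟨a1, b1⟩ := wU_mul_entry (ℓ := ℓ) g 1
  obtain ⟨a0, b0⟩ := wU_mul_entry (ℓ := ℓ) g 0
  rw [a1, b1, b0, a0, h1, h2]
  ring_nf
  exact ⟨trivial, trivial⟩

lemma card_out {ε : ZMod ℓ} (hε : ∀ t : ZMod ℓ, t ^ 2 ≠ ε) :
    Nat.card (OutSet ℓ ε) = ℓ ^ 2 - 1 := by
  rw [← card_cns hε]
  refine (Nat.card_eq_of_bijective
    (fun g : CnsSet ℓ ε => (⟨wU ℓ * g.1, wU_mul_cns g.2⟩ : OutSet ℓ ε)) ⟨?_, ?_⟩).symm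
  · rintro ⟨g, hg⟩ ⟨g', hg'⟩ h
    have := congrArg Subtype.val h
    simp only at this
    exact Subtype.ext (mul_left_cancel this)
  · rintro ⟨g, hg⟩
    refine ⟨⟨wU ℓ * g, wU_mul_out hg⟩, ?_⟩
    apply Subtype.ext
    show wU ℓ * (wU ℓ * g) = g
    rw [← mul_assoc, wU_sq, one_mul]

lemma two_ne_zero' (hodd : Odd ℓ) : (2 : ZMod ℓ) ≠ 0 := by
  have h2 : ¬ (ℓ ∣ 2) := by
    have := (Fact.out : Nat.Prime ℓ).two_le
    rcases hodd with ⟨k, hk⟩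
    intro hd
    have := Nat.le_of_dvd (by omega) hd
    omega
  have : ((2:ℕ) : ZMod ℓ) ≠ 0 := by
    rw [Ne, ZMod.natCast_eq_zero_iff]; exact h2
  simpa using this

lemma cns_out_disjoint (hodd : Odd ℓ) {ε : ZMod ℓ} (hε : ∀ t : ZMod ℓ, t ^ 2 ≠ ε) :
    Disjoint (CnsSet ℓ ε) (OutSet ℓ ε) := by
  rw [Set.disjoint_left]
  intro g hc ho
  obtain ⟨c1, c2⟩ := mem_cns_iff.mp hc
  obtain ⟨o1, o2⟩ := mem_out_iff.mp ho
  have h2 := two_ne_zero' (ℓ := ℓ) hodd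
  have hε0 : ε ≠ 0 := fun h => hε 0 (by rw [h]; ring)
  have hg00 : mat g 0 0 = 0 := by
    have : (2 : ZMod ℓ) * mat g 0 0 = 0 := by linear_combination o2 - c2
    exact (mul_eq_zero.mp this).resolve_left h2
  have hg10 : mat g 1 0 = 0 := by
    have : (2 : ZMod ℓ) * (ε * mat g 1 0) = 0 := by linear_combination o1 - c1
    rcases mul_eq_zero.mp this with h | h
    · exact absurd h h2
    · exact (mul_eq_zero.mp h).resolve_left hε0
  exact entries_ne_zero (Or.inl hc) ⟨hg00, hg10⟩

instance : Finite (GL2 ℓ) := by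
  unfold GL2 Matrix.GeneralLinearGroup
  infer_instance

lemma card_nns (hodd : Odd ℓ) {ε : ZMod ℓ} (hε : ∀ t : ZMod ℓ, t ^ 2 ≠ ε) :
    Nat.card (NnsSet ℓ ε) = 2 * (ℓ ^ 2 - 1) := by
  have : Nat.card (NnsSet ℓ ε) = (NnsSet ℓ ε).ncard := Nat.card_coe_set_eq _
  rw [this]
  rw [show NnsSet ℓ ε = CnsSet ℓ ε ∪ OutSet ℓ ε from rfl]
  rw [Set.ncard_union_eq (cns_out_disjoint hodd hε) (Set.toFinite _) (Set.toFinite _)]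
  rw [← Nat.card_coe_set_eq, ← Nat.card_coe_set_eq, card_cns hε, card_out hε]
  ring

lemma relindex_mul_card (G N : Subgroup (GL2 ℓ)) (hle : G ≤ N) :
    G.relIndex N * Nat.card G = Nat.card N := by
  have h := Subgroup.card_mul_index (G.subgroupOf N)
  rw [Nat.card_congr (Subgroup.subgroupOfEquivOfLe hle).toEquiv] at h
  rw [Subgroup.relIndex, mul_comm]
  exact h

def σ {ℓ : ℕ} : (ZMod ℓ)ˣ →* GL2 ℓ :=
  Units.map (algebraMap (ZMod ℓ) (Matrix (Fin 2) (Fin 2) (ZMod ℓ))).toMonoidHom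

lemma mat_σ (u : (ZMod ℓ)ˣ) : mat (σ u) = (u : ZMod ℓ) • (1 : Matrix (Fin 2) (Fin 2) (ZMod ℓ)) := by
  simp [σ, mat, Algebra.algebraMap_eq_smul_one]

lemma mat_σ_apply (u : (ZMod ℓ)ˣ) (i j : Fin 2) :
    mat (σ u) i j = if i = j then (u : ZMod ℓ) else 0 := by
  rw [mat_σ]
  simp [Matrix.one_apply, mul_ite]

lemma σ_injective : Function.Injective (σ (ℓ := ℓ)) := by
  intro s t h
  have := congrFun (congrFun (congrArg mat h) 0) 0
  rw [mat_σ_apply, mat_σ_apply] at this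
  simp at this
  exact Units.ext this

lemma σ_central (s : (ZMod ℓ)ˣ) (g : GL2 ℓ) : g * σ s = σ s * g := by
  apply mat_injective
  rw [mat_mul, mat_mul, mat_σ]
  simp [Matrix.mul_smul, Matrix.smul_mul]

lemma mul_σ_entry (g : GL2 ℓ) (s : (ZMod ℓ)ˣ) (i j : Fin 2) :
    mat (g * σ s) i j = mat g i j * (s : ZMod ℓ) := by
  rw [mul_entry, mat_σ_apply, mat_σ_apply]
  fin_cases i <;> fin_cases j <;> simp

lemma σ_mem_cns {ε : ZMod ℓ} (s : (ZMod ℓ)ˣ) : σ s ∈ CnsSet ℓ ε := by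
  rw [mem_cns_iff, mat_σ_apply, mat_σ_apply, mat_σ_apply, mat_σ_apply]
  norm_num

lemma out_mul_σ {ε : ZMod ℓ} {g : GL2 ℓ} (hg : g ∈ OutSet ℓ ε) (s : (ZMod ℓ)ˣ) :
    g * σ s ∈ OutSet ℓ ε := by
  obtain ⟨o1, o2⟩ := mem_out_iff.mp hg
  rw [mem_out_iff, mul_σ_entry, mul_σ_entry, mul_σ_entry, mul_σ_entry, o1, o2]
  constructor <;> ring

lemma out_mul_out {ε : ZMod ℓ} {g h : GL2 ℓ} (hg : g ∈ OutSet ℓ ε) (hh : h ∈ OutSet ℓ ε) :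
    g * h ∈ CnsSet ℓ ε := by
  obtain ⟨a1, a2⟩ := mem_out_iff.mp hg
  obtain ⟨b1, b2⟩ := mem_out_iff.mp hh
  rw [mem_cns_iff, mul_entry, mul_entry, mul_entry, mul_entry, a1, a2, b1, b2]
  constructor <;> ring

lemma cns_scalar {ε : ZMod ℓ} {g : GL2 ℓ} (hg : g ∈ CnsSet ℓ ε) (h0 : mat g 1 0 = 0) :
    ∃ s : (ZMod ℓ)ˣ, g = σ s := by
  obtain ⟨c1, c2⟩ := mem_cns_iff.mp hg
  have hne : mat g 0 0 ≠ 0 := fun h => entries_ne_zero (Or.inl hg) ⟨h, h0⟩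
  refine ⟨Units.mk0 (mat g 0 0) hne, ?_⟩
  apply mat_injective
  ext i j
  rw [mat_σ_apply]
  fin_cases i <;> fin_cases j <;> simp [c1, c2, h0]

lemma out_sq {ε : ZMod ℓ} {g : GL2 ℓ} (hg : g ∈ OutSet ℓ ε)
    (hε : ∀ t : ZMod ℓ, t ^ 2 ≠ ε) : ∃ c : (ZMod ℓ)ˣ, g * g = σ c := by
  apply cns_scalar (out_mul_out hg hg)
  obtain ⟨o1, o2⟩ := mem_out_iff.mp hg
  rw [mul_entry, o2]
  ring

lemma wU_mem_out {ε : ZMod ℓ} : wU ℓ ∈ OutSet ℓ ε := by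
  obtain ⟨e1, e2, e3, e4⟩ := wU_entries (ℓ := ℓ)
  rw [mem_out_iff, e2, e3, e4, e1]
  norm_num

/-- cardinality of a group that is a union of a scalar part and a shifted part -/
lemma card_two_coset (hodd : Odd ℓ) {ε : ZMod ℓ} (hε : ∀ t : ZMod ℓ, t ^ 2 ≠ ε)
    (G : Subgroup (GL2 ℓ)) (S : Subgroup (ZMod ℓ)ˣ) (g₀ : GL2 ℓ) (hg₀ : g₀ ∈ OutSet ℓ ε)
    (hcar : (G : Set (GL2 ℓ)) = σ '' ↑S ∪ (fun s => g₀ * σ s) '' ↑S) :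
    Nat.card G = 2 * Nat.card S := by
  have h1 : Nat.card G = ((G : Set (GL2 ℓ))).ncard := Nat.card_coe_set_eq _
  rw [h1, hcar]
  have hdisj : Disjoint (σ '' (S : Set (ZMod ℓ)ˣ)) ((fun s => g₀ * σ s) '' ↑S) := by
    rw [Set.disjoint_left]
    rintro g ⟨s, hs, rfl⟩ ⟨t, ht, hgt⟩
    have hcns : σ s ∈ CnsSet ℓ ε := σ_mem_cns s
    have hout : σ s ∈ OutSet ℓ ε := by rw [← hgt]; exact out_mul_σ hg₀ t
    exact Set.disjoint_left.mp (cns_out_disjoint hodd hε) hcns hout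
  rw [Set.ncard_union_eq hdisj (Set.toFinite _) (Set.toFinite _)]
  rw [Set.ncard_image_of_injective _ σ_injective,
    Set.ncard_image_of_injective _ (fun a b h => σ_injective (mul_left_cancel h))]
  rw [← Nat.card_coe_set_eq]
  have : Nat.card (S : Set (ZMod ℓ)ˣ) = Nat.card S := rfl
  rw [this]
  ring


lemma trace_conj (a g : GL2 ℓ) : Matrix.trace (mat (a * g * a⁻¹)) = Matrix.trace (mat g) := by
  rw [mat_mul, mat_mul, Matrix.trace_mul_comm, ← Matrix.mul_assoc, ← mat_mul, inv_mul_cancel,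
    mat_one, Matrix.one_mul]

lemma det_conj (a g : GL2 ℓ) : (mat (a * g * a⁻¹)).det = (mat g).det := by
  rw [mat_mul, mat_mul, Matrix.det_mul, Matrix.det_mul, mul_comm, ← mul_assoc, ← Matrix.det_mul,
    ← mat_mul, inv_mul_cancel, mat_one, Matrix.det_one, one_mul]

lemma cns_diag_scalar (hodd : Odd ℓ) {ε : ZMod ℓ} (hε : ∀ t : ZMod ℓ, t ^ 2 ≠ ε)
    {x y : ZMod ℓ} (g : GL2 ℓ) (hg : mat g = !![x, ε * y; y, x])
    (a : GL2 ℓ) (hd : mat (a * g * a⁻¹) 0 1 = 0 ∧ mat (a * g * a⁻¹) 1 0 = 0) :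
    y = 0 := by
  by_contra hy
  set D := mat (a * g * a⁻¹) with hD
  have htr : D 0 0 + D 1 1 = 2 * x := by
    have := trace_conj a g
    rw [hg] at this
    simpa [Matrix.trace_fin_two, two_mul] using this
  have hdet : D 0 0 * D 1 1 = x ^ 2 - ε * y ^ 2 := by
    have := det_conj a g
    rw [hg] at this
    rw [Matrix.det_fin_two, Matrix.det_fin_two] at this
    rw [← hD] at this
    rw [hd.1, hd.2] at this
    simp only [Matrix.cons_val', Matrix.cons_val_zero, Matrix.cons_val_one, Matrix.head_cons,
      Matrix.empty_val', Matrix.cons_val_fin_one, Matrix.head_fin_const, mul_zero, sub_zero] at this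
    rw [this]
    norm_num
    ring
  apply hε ((D 0 0 - D 1 1) * (2 * y)⁻¹)
  have h2y : (2 * y : ZMod ℓ) ≠ 0 := mul_ne_zero (two_ne_zero' hodd) hy
  have key : (D 0 0 - D 1 1) ^ 2 = ε * (2 * y) ^ 2 := by
    have h4 : (D 0 0 - D 1 1) ^ 2 = (D 0 0 + D 1 1) ^ 2 - 4 * (D 0 0 * D 1 1) := by ring
    rw [h4, htr, hdet]; ring
  rw [mul_pow, inv_pow, key, mul_assoc, mul_inv_cancel₀ (pow_ne_zero 2 h2y), mul_one]

/-- Forward structure: a subgroup of N_ns belonging to C_s is scalar ∪ g₀·scalar. -/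
lemma forward_carrier (hodd : Odd ℓ) {ε : ZMod ℓ} (hε : ∀ t : ZMod ℓ, t ^ 2 ≠ ε)
    (Nns G : Subgroup (GL2 ℓ)) (hNns : (Nns : Set (GL2 ℓ)) = NnsSet ℓ ε)
    (hle : G ≤ Nns) (hb : BelongsCs G) :
    ∃ g₀ ∈ OutSet ℓ ε,
      (G : Set (GL2 ℓ)) = σ '' ↑(Subgroup.comap (σ (ℓ := ℓ)) G) ∪
        (fun s => g₀ * σ s) '' ↑(Subgroup.comap (σ (ℓ := ℓ)) G) := by
  obtain ⟨⟨a, ha⟩, hz⟩ := hb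
  have hmem : ∀ g ∈ G, g ∈ NnsSet ℓ ε := by
    intro g hg
    rw [← hNns]
    exact hle hg
  -- every element of G in CnsSet is scalar
  have claim1 : ∀ g ∈ G, g ∈ CnsSet ℓ ε → ∃ s : (ZMod ℓ)ˣ, g = σ s := by
    intro g hg hcns
    apply cns_scalar hcns
    obtain ⟨x, y, hm⟩ := hcns
    have hy : y = 0 := cns_diag_scalar hodd hε g hm a ⟨(ha g hg).1, (ha g hg).2⟩
    rw [hm]
    simp [hy]
  -- there is an element of G in the outer coset
  have hex : ∃ g₀ ∈ G, g₀ ∈ OutSet ℓ ε := by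
    by_contra hall
    push_neg at hall
    apply hz
    refine ⟨1, fun g hg => ?_⟩
    have hcns : g ∈ CnsSet ℓ ε := by
      rcases hmem g hg with h | h
      · exact h
      · exact absurd h (hall g hg)
    obtain ⟨s, rfl⟩ := claim1 g hg hcns
    have : (1 : GL2 ℓ) * σ s * 1⁻¹ = σ s := by group
    rw [this]
    exact ⟨(s : ZMod ℓ), mat_σ s⟩
  obtain ⟨g₀, hg₀G, hg₀out⟩ := hex
  refine ⟨g₀, hg₀out, ?_⟩
  ext g
  simp only [SetLike.mem_coe, Set.mem_union, Set.mem_image]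
  constructor
  · intro hg
    rcases hmem g hg with hcns | hout
    · obtain ⟨s, rfl⟩ := claim1 g hg hcns
      exact Or.inl ⟨s, Subgroup.mem_comap.mpr hg, rfl⟩
    · -- g is outer: g₀ * g is in Cns ∩ G hence scalar
      have hprod : g₀ * g ∈ G := mul_mem hg₀G hg
      obtain ⟨s, hs⟩ := claim1 _ hprod (out_mul_out hg₀out hout)
      obtain ⟨c, hc⟩ := out_sq hg₀out hε
      have hcG : σ c ∈ G := by rw [← hc]; exact mul_mem hg₀G hg₀G
      refine Or.inr ⟨c⁻¹ * s, ?_, ?_⟩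
      · show c⁻¹ * s ∈ Subgroup.comap (σ (ℓ := ℓ)) G
        rw [Subgroup.mem_comap, _root_.map_mul, _root_.map_inv]
        exact mul_mem (inv_mem hcG) (by rw [← hs]; exact hprod)
      · -- g₀ * σ (c⁻¹ * s) = g
        have hinv : g₀⁻¹ = σ c⁻¹ * g₀ := by
          apply inv_eq_of_mul_eq_one_right
          rw [← mul_assoc, σ_central c⁻¹ g₀, mul_assoc, hc, ← _root_.map_mul,
            inv_mul_cancel, _root_.map_one]
        have hgeq : g = g₀⁻¹ * σ s := by
          rw [← hs, ← mul_assoc, inv_mul_cancel, one_mul]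
        rw [hgeq, hinv, _root_.map_mul, ← mul_assoc, σ_central c⁻¹ g₀, mul_assoc]
  · rintro (⟨s, hs, rfl⟩ | ⟨s, hs, rfl⟩)
    · exact Subgroup.mem_comap.mp hs
    · exact mul_mem hg₀G (Subgroup.mem_comap.mp hs)

lemma wU_inv : (wU ℓ)⁻¹ = wU ℓ := by
  apply inv_eq_of_mul_eq_one_right
  exact wU_sq

/-- the subgroup generated by scalars in S and wU -/
def twoGrp (S : Subgroup (ZMod ℓ)ˣ) : Subgroup (GL2 ℓ) where
  carrier := σ '' ↑S ∪ (fun s => wU ℓ * σ s) '' ↑S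
  one_mem' := Or.inl ⟨1, S.one_mem, _root_.map_one σ⟩
  mul_mem' := by
    rintro a b (⟨s, hs, rfl⟩ | ⟨s, hs, rfl⟩) (⟨t, ht, rfl⟩ | ⟨t, ht, rfl⟩)
    · exact Or.inl ⟨s * t, mul_mem hs ht, by rw [_root_.map_mul]⟩
    · refine Or.inr ⟨s * t, mul_mem hs ht, ?_⟩
      show wU ℓ * σ (s * t) = σ s * (wU ℓ * σ t)
      rw [_root_.map_mul, ← mul_assoc (σ s), ← σ_central s (wU ℓ), mul_assoc]
    · refine Or.inr ⟨s * t, mul_mem hs ht, ?_⟩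
      show wU ℓ * σ (s * t) = wU ℓ * σ s * σ t
      rw [_root_.map_mul, mul_assoc]
    · refine Or.inl ⟨s * t, mul_mem hs ht, ?_⟩
      show σ (s * t) = wU ℓ * σ s * (wU ℓ * σ t)
      have h5 : wU ℓ * σ s * (wU ℓ * σ t) = wU ℓ * wU ℓ * (σ s * σ t) := by
        rw [mul_assoc (wU ℓ) (σ s), ← mul_assoc (σ s), ← σ_central s (wU ℓ)]
        group
      rw [_root_.map_mul, h5, wU_sq, one_mul]
  inv_mem' := by
    rintro a (⟨s, hs, rfl⟩ | ⟨s, hs, rfl⟩)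
    · exact Or.inl ⟨s⁻¹, inv_mem hs, by rw [_root_.map_inv]⟩
    · refine Or.inr ⟨s⁻¹, inv_mem hs, ?_⟩
      show wU ℓ * σ s⁻¹ = (wU ℓ * σ s)⁻¹
      rw [σ_central s⁻¹ (wU ℓ), _root_.map_inv, _root_.mul_inv_rev, wU_inv]

lemma twoGrp_coe (S : Subgroup (ZMod ℓ)ˣ) :
    (twoGrp S : Set (GL2 ℓ)) = σ '' ↑S ∪ (fun s => wU ℓ * σ s) '' ↑S := rfl

lemma mem_twoGrp_iff {S : Subgroup (ZMod ℓ)ˣ} {g : GL2 ℓ} :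
    g ∈ twoGrp S ↔ (∃ s ∈ S, σ s = g) ∨ (∃ s ∈ S, wU ℓ * σ s = g) := by
  rfl

lemma twoGrp_le_nns {ε : ZMod ℓ} (S : Subgroup (ZMod ℓ)ˣ) (Nns : Subgroup (GL2 ℓ))
    (hNns : (Nns : Set (GL2 ℓ)) = NnsSet ℓ ε) : twoGrp S ≤ Nns := by
  intro g hg
  have : g ∈ NnsSet ℓ ε := by
    rcases mem_twoGrp_iff.mp hg with ⟨s, _, rfl⟩ | ⟨s, _, rfl⟩
    · exact Or.inl (σ_mem_cns s)
    · exact Or.inr (out_mul_σ wU_mem_out s)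
  rw [← SetLike.mem_coe, hNns]
  exact this

lemma conj_mem_zset {a g : GL2 ℓ} (h : a * g * a⁻¹ ∈ ZSet ℓ) : g ∈ ZSet ℓ := by
  obtain ⟨x, hx⟩ := h
  refine ⟨x, ?_⟩
  have : g = a⁻¹ * (a * g * a⁻¹) * a := by group
  rw [this, mat_mul, mat_mul, hx]
  rw [Matrix.mul_smul, Matrix.smul_mul]
  rw [Matrix.mul_one, ← mat_mul, inv_mul_cancel, mat_one]

lemma wU_not_zset (hodd : Odd ℓ) : wU ℓ ∉ ZSet ℓ := by
  rintro ⟨x, hx⟩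
  obtain ⟨e1, e2, e3, e4⟩ := wU_entries (ℓ := ℓ)
  have h1 : (1 : ZMod ℓ) = x := by
    have := congrFun (congrFun hx 0) 0
    rw [e1] at this
    simpa using this
  have h2 : (-1 : ZMod ℓ) = x := by
    have := congrFun (congrFun hx 1) 1
    rw [e4] at this
    simpa using this
  apply two_ne_zero' (ℓ := ℓ) hodd
  linear_combination h1 - h2

lemma twoGrp_belongs (hodd : Odd ℓ) (S : Subgroup (ZMod ℓ)ˣ) : BelongsCs (twoGrp S) := by
  constructor
  · refine ⟨1, fun g hg => ?_⟩
    have h1 : (1 : GL2 ℓ) * g * 1⁻¹ = g := by group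
    rw [h1]
    rcases mem_twoGrp_iff.mp hg with ⟨s, _, rfl⟩ | ⟨s, _, rfl⟩
    · constructor
      · rw [mat_σ_apply]; norm_num
      · rw [mat_σ_apply]; norm_num
    · constructor
      · rw [mul_σ_entry]
        obtain ⟨e1, e2, e3, e4⟩ := wU_entries (ℓ := ℓ)
        rw [e2, zero_mul]
      · rw [mul_σ_entry]
        obtain ⟨e1, e2, e3, e4⟩ := wU_entries (ℓ := ℓ)
        rw [e3, zero_mul]
  · rintro ⟨a, ha⟩
    have hw : wU ℓ ∈ twoGrp S := mem_twoGrp_iff.mpr (Or.inr ⟨1, S.one_mem, by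
      rw [_root_.map_one, mul_one]⟩)
    exact wU_not_zset hodd (conj_mem_zset (ha _ hw))


end Aux

end Paper

theorem statement_13 (ℓ : ℕ) (hℓ : Nat.Prime ℓ) (hodd : Odd ℓ) (ε : ZMod ℓ)
    (hε : ∀ t : ZMod ℓ, t ^ 2 ≠ ε)
    (Nns : Subgroup (GL2 ℓ)) (hNns : (Nns : Set (GL2 ℓ)) = Paper.NnsSet ℓ ε) :
    { n : ℕ | ∃ G : Subgroup (GL2 ℓ), G ≤ Nns ∧ Paper.BelongsCs G ∧ G.relIndex Nns = n } =
      { n : ℕ | 0 < n ∧ (ℓ + 1) ∣ n ∧ n ∣ ℓ ^ 2 - 1 } := by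
  have : Fact (Nat.Prime ℓ) := ⟨hℓ⟩
  have hl3 : 3 ≤ ℓ := by
    have h2 := hℓ.two_le
    rcases hodd with ⟨k, hk⟩
    omega
  have hfact : ℓ ^ 2 - 1 = (ℓ + 1) * (ℓ - 1) := by
    obtain ⟨k, rfl⟩ : ∃ k, ℓ = k + 1 := ⟨ℓ - 1, by omega⟩
    rw [show (k+1)^2 = (k+2)*k + 1 from by ring, Nat.add_sub_cancel, Nat.add_sub_cancel]
  have hNcard : Nat.card Nns = 2 * (ℓ ^ 2 - 1) := by
    rw [← Paper.card_nns hodd hε]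
    exact Nat.card_congr (Equiv.setCongr hNns)
  ext n
  simp only [Set.mem_setOf_eq]
  constructor
  · rintro ⟨G, hle, hb, rfl⟩
    obtain ⟨g₀, hg₀, hcar⟩ := Paper.forward_carrier hodd hε Nns G hNns hle hb
    set S := Subgroup.comap (Paper.σ (ℓ := ℓ)) G with hS
    have hcardG : Nat.card G = 2 * Nat.card S :=
      Paper.card_two_coset hodd hε G S g₀ hg₀ hcar
    have hcU : Nat.card (ZMod ℓ)ˣ = ℓ - 1 := by
      rw [Nat.card_eq_fintype_card, ZMod.card_units_eq_totient, Nat.totient_prime hℓ]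
    have hS_dvd : Nat.card S ∣ ℓ - 1 := by
      have h := Subgroup.card_subgroup_dvd_card S
      rwa [hcU] at h
    have hSpos : 0 < Nat.card S := Nat.card_pos
    have hrel := Paper.relindex_mul_card G Nns hle
    rw [hcardG, hNcard] at hrel
    obtain ⟨m, hm⟩ := hS_dvd
    have hkey : G.relIndex Nns = (ℓ + 1) * m := by
      apply Nat.eq_of_mul_eq_mul_right hSpos
      have h2 : G.relIndex Nns * Nat.card S * 2 = (ℓ ^ 2 - 1) * 2 := by ring_nf; ring_nf at hrel; omega
      have h3 : G.relIndex Nns * Nat.card S = ℓ ^ 2 - 1 := by omega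
      rw [h3, hfact, hm]
      ring
    have hmpos : 0 < m := by
      rcases Nat.eq_zero_or_pos m with h | h
      · rw [h, mul_zero] at hm; omega
      · exact h
    refine ⟨by rw [hkey]; positivity, ⟨m, hkey⟩, ⟨Nat.card S, ?_⟩⟩
    rw [hkey, hfact, hm]
    ring
  · rintro ⟨hpos, ⟨m, rfl⟩, hdvd⟩
    have hmpos : 0 < m := by
      rcases Nat.eq_zero_or_pos m with h | h
      · subst h; simp at hpos
      · exact h
    have hmdvd : m ∣ ℓ - 1 := by
      rw [hfact] at hdvd
      exact (Nat.mul_dvd_mul_iff_left (by omega : 0 < ℓ + 1)).mp hdvd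
    obtain ⟨d, hd⟩ := hmdvd
    have hdpos : 0 < d := by
      rcases Nat.eq_zero_or_pos d with h | h
      · rw [h, mul_zero] at hd; omega
      · exact h
    have hcU : Nat.card (ZMod ℓ)ˣ = ℓ - 1 := by
      rw [Nat.card_eq_fintype_card, ZMod.card_units_eq_totient, Nat.totient_prime hℓ]
    obtain ⟨gen, hgen⟩ := IsCyclic.exists_generator (α := (ZMod ℓ)ˣ)
    have horder : orderOf gen = ℓ - 1 := by
      rw [orderOf_eq_card_of_forall_mem_zpowers hgen, hcU]
    set S := Subgroup.zpowers (gen ^ m) with hSdef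
    have hcardS : Nat.card S = d := by
      rw [Nat.card_zpowers, orderOf_pow, horder,
        Nat.gcd_eq_right ⟨d, hd⟩, hd, Nat.mul_div_cancel_left _ hmpos]
    refine ⟨Paper.twoGrp S, Paper.twoGrp_le_nns S Nns hNns,
      Paper.twoGrp_belongs hodd S, ?_⟩
    have hcardG : Nat.card (Paper.twoGrp S) = 2 * d := by
      rw [Paper.card_two_coset hodd hε (Paper.twoGrp S) S (Paper.wU ℓ)
        Paper.wU_mem_out (Paper.twoGrp_coe S), hcardS]
    have hrel := Paper.relindex_mul_card (Paper.twoGrp S) Nns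
      (Paper.twoGrp_le_nns S Nns hNns)
    rw [hcardG, hNcard, hfact, hd] at hrel
    apply Nat.eq_of_mul_eq_mul_right (show 0 < 2 * d by omega)
    rw [hrel]
    ring
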